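/- Let X_1,...,X_{n+1} be fixed reals and Z_1,...,Z_{n+1} fixed reals, with F_{n+1} their joint empirical distribution. Let (w_1,...,w_{n+1}) be a uniform random point of the (n+1)-simplex (i.e., Dirichlet(1,...,1)). Then for any α, β ≥ 0 such that 1 − α(X_i − μ) − β(B − Z_i) ≥ 0 for all i, P(∑ w_i X_i ≥ μ and ∑ w_i Z_i ≤ B) ≤ ∏_{i=1}^{n+1} 1/(1 − α(X_i − μ) − β(B − Z_i)) = exp(−(n+1) E_{F_{n+1}}[log(1 − α(X − μ) − β(B − Z))]). -/

import Mathlib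

open MeasureTheory ProbabilityTheory Real Set

lemma aux_exp_integral_Ioi {b : ℝ} (hb : 0 < b) :
    ∫ x in Set.Ioi (0:ℝ), exp (-(b * x)) = b⁻¹ := by
  have h := integral_comp_mul_left_Ioi (fun x => exp (-x)) 0 hb
  simp only [mul_zero, integral_exp_neg_Ioi, neg_zero, exp_zero, smul_eq_mul, mul_one] at h
  exact h

lemma aux_lintegral_exp_expMeasure {t : ℝ} (ht : t < 1) :
    ∫⁻ x, ENNReal.ofReal (exp (t * x)) ∂(expMeasure 1) = ENNReal.ofReal ((1 - t)⁻¹) := by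
  have hb : 0 < 1 - t := by linarith
  have hmeas : Measurable fun x : ℝ => ENNReal.ofReal (exp (t * x)) :=
    (measurable_exp.comp (measurable_id.const_mul t)).ennreal_ofReal
  have hpdf : Measurable (gammaPDF 1 1) := (measurable_gammaPDFReal 1 1).ennreal_ofReal
  rw [expMeasure, gammaMeasure, lintegral_withDensity_eq_lintegral_mul _ hpdf hmeas]
  have heq : ∀ x : ℝ, (fun x => gammaPDF 1 1 x) x * ENNReal.ofReal (exp (t * x))
      = (Set.Ici (0:ℝ)).indicator (fun x => ENNReal.ofReal (exp ((t - 1) * x))) x := by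
    intro x
    show exponentialPDF 1 x * ENNReal.ofReal (exp (t * x))
        = (Set.Ici (0:ℝ)).indicator (fun x => ENNReal.ofReal (exp ((t - 1) * x))) x
    rw [exponentialPDF_eq]
    simp only [Set.indicator_apply, Set.mem_Ici]
    by_cases hx : 0 ≤ x
    · rw [if_pos hx, if_pos hx, ← ENNReal.ofReal_mul (by positivity)]
      congr 1
      rw [one_mul, one_mul, ← Real.exp_add]
      ring_nf
    · rw [if_neg hx, if_neg hx, ENNReal.ofReal_zero, zero_mul]
  calc ∫⁻ x, ((fun x => gammaPDF 1 1 x) * fun x => ENNReal.ofReal (exp (t * x))) x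
      = ∫⁻ x, (Set.Ici (0:ℝ)).indicator (fun x => ENNReal.ofReal (exp ((t - 1) * x))) x := by
        exact lintegral_congr fun x => heq x
    _ = ∫⁻ x in Set.Ici (0:ℝ), ENNReal.ofReal (exp ((t - 1) * x)) := by
        rw [lintegral_indicator measurableSet_Ici]
    _ = ∫⁻ x in Set.Ioi (0:ℝ), ENNReal.ofReal (exp ((t - 1) * x)) := by
        exact (setLIntegral_congr Ioi_ae_eq_Ici).symm
    _ = ENNReal.ofReal (∫ x in Set.Ioi (0:ℝ), exp ((t - 1) * x)) := by
        rw [ofReal_integral_eq_lintegral_ofReal]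
        · have h1 : (fun x : ℝ => exp ((t - 1) * x)) = fun x : ℝ => exp (-(1 - t) * x) := by
            funext x; rw [neg_sub]
          rw [h1]
          exact exp_neg_integrableOn_Ioi 0 hb
        · exact Filter.Eventually.of_forall fun x => (exp_pos _).le
    _ = ENNReal.ofReal ((1 - t)⁻¹) := by
        congr 1
        have h1 : (fun x : ℝ => exp ((t - 1) * x)) = fun x : ℝ => exp (-((1 - t) * x)) := by
          funext x; congr 1; ring
        rw [h1, aux_exp_integral_Ioi hb]

lemma aux_integrable_exp_expMeasure {t : ℝ} (ht : t < 1) :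
    Integrable (fun x => exp (t * x)) (expMeasure 1) := by
  refine ⟨(measurable_exp.comp (measurable_id.const_mul t)).aestronglyMeasurable, ?_⟩
  rw [hasFiniteIntegral_iff_ofReal (Filter.Eventually.of_forall fun x => (exp_pos _).le),
    aux_lintegral_exp_expMeasure ht]
  exact ENNReal.ofReal_lt_top

lemma aux_integral_exp_expMeasure {t : ℝ} (ht : t < 1) :
    ∫ x, exp (t * x) ∂(expMeasure 1) = (1 - t)⁻¹ := by
  have hm : AEStronglyMeasurable (fun x : ℝ => exp (t * x)) (expMeasure 1) :=
    (measurable_exp.comp (measurable_id.const_mul t)).aestronglyMeasurable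
  rw [integral_eq_lintegral_of_nonneg_ae (Filter.Eventually.of_forall fun x => (exp_pos _).le) hm,
    aux_lintegral_exp_expMeasure ht, ENNReal.toReal_ofReal (inv_nonneg.mpr (by linarith))]

/-- Chernoff-type upper bound on the boundary crossing probability for Dirichlet
weights (realized as normalized i.i.d. `Exp(1)` variables): for fixed reals
`X_1, ..., X_{n+1}` and `Z_1, ..., Z_{n+1}`, and any `α, β ≥ 0` with
`1 - α(X_i - μ) - β(B - Z_i) > 0` for all `i`,
`P(∑ wᵢ Xᵢ ≥ μ ∧ ∑ wᵢ Zᵢ ≤ B) ≤ ∏ᵢ 1/(1 - α(Xᵢ - μ) - β(B - Zᵢ))`,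
and the product equals `exp(-(n+1) E_{F_{n+1}}[log(1 - α(X - μ) - β(B - Z))])`. -/
theorem stmt6 {Ω : Type*} [MeasureSpace Ω] [IsProbabilityMeasure (ℙ : Measure Ω)]
    (n : ℕ) (R : Fin (n + 1) → Ω → ℝ) (hmeas : ∀ i, Measurable (R i))
    (hiid : iIndepFun R ℙ)
    (hdist : ∀ i, Measure.map (R i) ℙ = ProbabilityTheory.expMeasure 1)
    (X Z : Fin (n + 1) → ℝ) (μ B α β : ℝ) (hα : 0 ≤ α) (hβ : 0 ≤ β)
    (hpos : ∀ i, 0 < 1 - α * (X i - μ) - β * (B - Z i)) :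
    ℙ {ω | μ ≤ ∑ i, (R i ω / ∑ j, R j ω) * X i ∧
           ∑ i, (R i ω / ∑ j, R j ω) * Z i ≤ B}
        ≤ ENNReal.ofReal (∏ i, 1 / (1 - α * (X i - μ) - β * (B - Z i))) ∧
      (∏ i, 1 / (1 - α * (X i - μ) - β * (B - Z i)))
        = exp (-((n : ℝ) + 1) *
            (((n : ℝ) + 1)⁻¹ * ∑ i, log (1 - α * (X i - μ) - β * (B - Z i)))) := by
  have hprodnn : (0:ℝ) ≤ ∏ i, 1 / (1 - α * (X i - μ) - β * (B - Z i)) :=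
    Finset.prod_nonneg fun i _ => le_of_lt (by have := hpos i; positivity)
  set c : Fin (n + 1) → ℝ := fun i => α * (X i - μ) + β * (B - Z i) with hc
  have hc1 : ∀ i, c i < 1 := fun i => by have := hpos i; simp only [hc]; linarith
  have hprod : ∀ i, (1:ℝ) / (1 - α * (X i - μ) - β * (B - Z i)) = (1 - c i)⁻¹ := by
    intro i; rw [one_div]; congr 1; simp only [hc]; ring
  set S : Fin (n + 1) → Ω → ℝ := fun i ω => c i * R i ω with hS
  have hSmeas : ∀ i, Measurable (S i) := fun i => (hmeas i).const_mul (c i)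
  have hSiid : iIndepFun S ℙ :=
    hiid.comp (fun i (x : ℝ) => c i * x) (fun i => measurable_id.const_mul (c i))
  have hm : ∀ i, AEStronglyMeasurable (fun x : ℝ => exp (c i * x)) (Measure.map (R i) ℙ) :=
    fun i => (measurable_exp.comp (measurable_id.const_mul (c i))).aestronglyMeasurable
  have hint : ∀ i, Integrable (fun ω => exp (c i * R i ω)) ℙ := by
    intro i
    have h := aux_integrable_exp_expMeasure (hc1 i)
    rw [← hdist i] at h
    exact (integrable_map_measure (hm i) (hmeas i).aemeasurable).mp h
  have hmgf : ∀ i, mgf (S i) ℙ 1 = (1 - c i)⁻¹ := by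
    intro i
    have : mgf (S i) ℙ 1 = ∫ ω, exp (c i * R i ω) ∂ℙ := by
      simp only [mgf, hS, one_mul]
    rw [this, ← integral_map (hmeas i).aemeasurable (hm i), hdist i]
    exact aux_integral_exp_expMeasure (hc1 i)
  constructor
  · -- probability bound
    have hsub : {ω | μ ≤ ∑ i, (R i ω / ∑ j, R j ω) * X i ∧
           ∑ i, (R i ω / ∑ j, R j ω) * Z i ≤ B}
        ⊆ {ω | (0:ℝ) ≤ (∑ i, S i) ω} ∪ ⋃ i, {ω | R i ω ≤ 0} := by
      rintro ω ⟨h1, h2⟩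
      by_cases hR : ∀ i, 0 < R i ω
      · left
        have hT : 0 < ∑ j, R j ω := Finset.sum_pos (fun j _ => hR j) Finset.univ_nonempty
        simp_rw [div_mul_eq_mul_div, ← Finset.sum_div] at h1 h2
        have h1' : μ * ∑ j, R j ω ≤ ∑ i, R i ω * X i := (le_div_iff₀ hT).mp h1
        have h2' : ∑ i, R i ω * Z i ≤ B * ∑ j, R j ω := (div_le_iff₀ hT).mp h2
        show (0:ℝ) ≤ (∑ i, S i) ω
        have key : (∑ i, S i) ω
            = α * ((∑ i, R i ω * X i) - μ * ∑ j, R j ω)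
              + β * (B * (∑ j, R j ω) - ∑ i, R i ω * Z i) := by
          rw [Finset.sum_apply]
          simp only [hS, hc, Finset.mul_sum, mul_sub, ← Finset.sum_sub_distrib,
            ← Finset.sum_add_distrib]
          exact Finset.sum_congr rfl fun i _ => by ring
        rw [key]
        have := mul_nonneg hα (by linarith : (0:ℝ) ≤ (∑ i, R i ω * X i) - μ * ∑ j, R j ω)
        have := mul_nonneg hβ (by linarith : (0:ℝ) ≤ B * (∑ j, R j ω) - ∑ i, R i ω * Z i)
        linarith
      · right
        push_neg at hR
        obtain ⟨i, hi⟩ := hR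
        exact Set.mem_iUnion.mpr ⟨i, hi⟩
    have hnull : ∀ i, ℙ {ω | R i ω ≤ 0} = 0 := by
      intro i
      have he : {ω | R i ω ≤ 0} = R i ⁻¹' Set.Iic 0 := rfl
      rw [he, ← Measure.map_apply (hmeas i) measurableSet_Iic, hdist i,
        expMeasure, gammaMeasure, withDensity_apply _ measurableSet_Iic]
      have he2 : ∫⁻ x in Set.Iic (0:ℝ), gammaPDF 1 1 x
          = ∫⁻ x in Set.Iic (0:ℝ), exponentialPDF 1 x := rfl
      rw [he2, lintegral_exponentialPDF_eq_antiDeriv one_pos 0]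
      norm_num
    have hintS : ∀ i, Integrable (fun ω => exp (1 * S i ω)) ℙ := by
      intro i; simpa only [one_mul] using hint i
    have hintsum : Integrable (fun ω => exp (1 * (∑ i, S i) ω)) ℙ :=
      hSiid.integrable_exp_mul_sum hSmeas (fun i _ => hintS i)
    have hmarkov := measure_ge_le_exp_mul_mgf (X := ∑ i, S i) (μ := ℙ) 0 zero_le_one hintsum
    rw [mul_zero, exp_zero, one_mul, hSiid.mgf_sum hSmeas] at hmarkov
    have hmgfprod : ∏ i, mgf (S i) ℙ 1 = ∏ i, 1 / (1 - α * (X i - μ) - β * (B - Z i)) := by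
      refine Finset.prod_congr rfl fun i _ => ?_
      rw [hmgf i, hprod i]
    calc ℙ {ω | μ ≤ ∑ i, (R i ω / ∑ j, R j ω) * X i ∧
           ∑ i, (R i ω / ∑ j, R j ω) * Z i ≤ B}
        ≤ ℙ ({ω | (0:ℝ) ≤ (∑ i, S i) ω} ∪ ⋃ i, {ω | R i ω ≤ 0}) := measure_mono hsub
      _ ≤ ℙ {ω | (0:ℝ) ≤ (∑ i, S i) ω} + ℙ (⋃ i, {ω | R i ω ≤ 0}) := measure_union_le _ _
      _ = ℙ {ω | (0:ℝ) ≤ (∑ i, S i) ω} := by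
          rw [measure_iUnion_null fun i => hnull i, add_zero]
      _ ≤ ENNReal.ofReal (∏ i, 1 / (1 - α * (X i - μ) - β * (B - Z i))) := by
          rw [ENNReal.le_ofReal_iff_toReal_le (measure_ne_top _ _) hprodnn]
          calc (ℙ {ω | (0:ℝ) ≤ (∑ i, S i) ω}).toReal
              ≤ ∏ i, mgf (S i) ℙ 1 := hmarkov
            _ = _ := hmgfprod
  · -- product equals exponential form
    have hne : ((n : ℝ) + 1) ≠ 0 := by positivity
    have hs : -((n : ℝ) + 1) * (((n : ℝ) + 1)⁻¹
        * ∑ i, log (1 - α * (X i - μ) - β * (B - Z i)))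
        = ∑ i, -log (1 - α * (X i - μ) - β * (B - Z i)) := by
      rw [Finset.sum_neg_distrib]
      field_simp
    rw [hs, Real.exp_sum]
    refine Finset.prod_congr rfl fun i _ => ?_
    rw [exp_neg, exp_log (hpos i), one_div]
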